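/- Let n ≥ 1 be an integer, α > 0, c ∈ ℝ, 0 < A ≤ B with A ≤ e^{α·c} ≤ B, and set Θ(t) = ((α·t)/n + e^{α·c})^{1/α}. Let f : [0,∞) → ℝ be differentiable with f > 0 and f(t)/((α/n)·t + B) ≤ f'(t) ≤ f(t)/((α/n)·t + A) for all t ≥ 0. If the rescaled area f(t)·Θ(t)^{−n} converges to a limit L as t → ∞, then f(0)·B^{−n/α} ≤ L ≤ f(0)·A^{−n/α}. In particular, taking f(0) = H^n(M₀) (the initial area), A = (inf u₀)^{α}, B = (sup u₀)^{α}, the limiting radius r_∞ with L = r_∞^n·H^n(M^n) satisfies (1/sup u₀)·(H^n(M₀)/H^n(M^n))^{1/n} ≤ r_∞ ≤ (1/inf u₀)·(H^n(M₀)/H^n(M^n))^{1/n}. -/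

import Mathlib

private lemma aux_hasDeriv (n α C : ℝ) (hn : 0 < n) (hα : 0 < α) (hC : 0 < C)
    (f : ℝ → ℝ) (d t : ℝ) (ht : 0 ≤ t) (hd : HasDerivAt f d t) :
    HasDerivAt (fun s => f s * (α / n * s + C) ^ (-(n / α)))
      ((α / n * t + C) ^ (-(n / α) - 1) * (d * (α / n * t + C) - f t)) t := by
  have hb : 0 < α / n * t + C := by
    have := mul_nonneg (le_of_lt (div_pos hα hn)) ht
    linarith
  have hbase : HasDerivAt (fun s : ℝ => α / n * s + C) (α / n) t := by
    simpa using ((hasDerivAt_id t).const_mul (α / n)).add_const C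
  have hg := hbase.rpow_const (p := -(n / α)) (Or.inl hb.ne')
  have := hd.mul hg
  refine this.congr_deriv ?_
  have hsplit : (α / n * t + C) ^ (-(n / α)) =
      (α / n * t + C) ^ (-(n / α) - 1) * (α / n * t + C) := by
    rw [show -(n / α) = -(n / α) - 1 + 1 by ring, Real.rpow_add_one hb.ne']
    ring_nf
  have hc : α / n * -(n / α) = -1 := by field_simp
  rw [hsplit, hc]
  ring

private lemma aux_bound (n α C : ℝ) (hn : 0 < n) (hα : 0 < α) (hC : 0 < C)
    (f f' : ℝ → ℝ)
    (hderiv : ∀ t : ℝ, 0 ≤ t → HasDerivAt f (f' t) t)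
    (key : ∀ t : ℝ, 0 ≤ t → 0 ≤ f' t * (α / n * t + C) - f t)
    (t : ℝ) (ht : 0 ≤ t) :
    f 0 * C ^ (-(n / α)) ≤ f t * (α / n * t + C) ^ (-(n / α)) := by
  set g : ℝ → ℝ := fun s => f s * (α / n * s + C) ^ (-(n / α)) with hg
  have hmono : MonotoneOn g (Set.Ici 0) := by
    apply monotoneOn_of_deriv_nonneg (convex_Ici 0)
    · intro x hx
      exact (aux_hasDeriv n α C hn hα hC f (f' x) x hx (hderiv x hx)).continuousAt.continuousWithinAt
    · intro x hx
      rw [interior_Ici] at hx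
      exact (aux_hasDeriv n α C hn hα hC f (f' x) x (le_of_lt hx) (hderiv x (le_of_lt hx))).differentiableAt.differentiableWithinAt
    · intro x hx
      rw [interior_Ici] at hx
      have hx' : (0:ℝ) ≤ x := le_of_lt hx
      rw [(aux_hasDeriv n α C hn hα hC f (f' x) x hx' (hderiv x hx')).deriv]
      have hb : 0 < α / n * x + C := by
        have := mul_nonneg (le_of_lt (div_pos hα hn)) hx'
        linarith
      exact mul_nonneg (Real.rpow_nonneg hb.le _) (key x hx')
  have := hmono (Set.self_mem_Ici) ht ht
  simpa [hg] using this

/-- Bounds on the limit of the rescaled area, and the resulting bounds on the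
limiting radius r_∞ (Lemma 5.2 of the paper). -/
theorem stmt3 (n : ℕ) (hn : 1 ≤ n) (α c A B : ℝ) (hα : 0 < α)
    (hA : 0 < A) (hAB : A ≤ B) (hAc : A ≤ Real.exp (α * c)) (hcB : Real.exp (α * c) ≤ B)
    (f f' : ℝ → ℝ)
    (hderiv : ∀ t : ℝ, 0 ≤ t → HasDerivAt f (f' t) t)
    (hpos : ∀ t : ℝ, 0 ≤ t → 0 < f t)
    (hlow : ∀ t : ℝ, 0 ≤ t → f t / (α / n * t + B) ≤ f' t)
    (hup : ∀ t : ℝ, 0 ≤ t → f' t ≤ f t / (α / n * t + A))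
    (L : ℝ)
    (hL : Filter.Tendsto
      (fun t : ℝ => f t / ((α * t / n + Real.exp (α * c)) ^ ((1 : ℝ) / α)) ^ (n : ℕ))
      Filter.atTop (nhds L)) :
    (f 0 * B ^ (-((n : ℝ) / α)) ≤ L ∧ L ≤ f 0 * A ^ (-((n : ℝ) / α))) ∧
    ∀ rinf areaM areaM0 u0inf u0sup : ℝ,
      0 < u0inf → 0 < u0sup → 0 < areaM → 0 < rinf →
      A = u0inf ^ α → B = u0sup ^ α → f 0 = areaM0 → L = rinf ^ (n : ℕ) * areaM →
      (1 / u0sup) * (areaM0 / areaM) ^ ((1 : ℝ) / n) ≤ rinf ∧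
      rinf ≤ (1 / u0inf) * (areaM0 / areaM) ^ ((1 : ℝ) / n) := by
  have hn' : (0:ℝ) < n := by exact_mod_cast hn
  have hB : 0 < B := lt_of_lt_of_le hA hAB
  set m : ℝ := (n : ℝ) / α with hm
  -- rescaled area equals f t * x ^ (-m)
  have hrescale : ∀ t : ℝ, 0 ≤ t →
      f t / ((α * t / n + Real.exp (α * c)) ^ ((1 : ℝ) / α)) ^ (n : ℕ)
        = f t * (α * t / n + Real.exp (α * c)) ^ (-m) := by
    intro t ht
    have hx : 0 < α * t / n + Real.exp (α * c) := by
      have := mul_nonneg hα.le ht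
      have h2 := Real.exp_pos (α * c)
      have : 0 ≤ α * t / n := div_nonneg (mul_nonneg hα.le ht) hn'.le
      linarith
    have hpow : ((α * t / n + Real.exp (α * c)) ^ ((1 : ℝ) / α)) ^ (n : ℕ)
        = (α * t / n + Real.exp (α * c)) ^ m := by
      rw [← Real.rpow_natCast ((α * t / n + Real.exp (α * c)) ^ ((1 : ℝ) / α)) n,
        ← Real.rpow_mul hx.le]
      congr 1
      rw [hm]
      field_simp
    rw [hpow, Real.rpow_neg hx.le, div_eq_mul_inv]
  -- lower and upper eventual bounds
  have hbound : ∀ t : ℝ, 0 ≤ t →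
      f 0 * B ^ (-m) ≤ f t / ((α * t / n + Real.exp (α * c)) ^ ((1 : ℝ) / α)) ^ (n : ℕ) ∧
      f t / ((α * t / n + Real.exp (α * c)) ^ ((1 : ℝ) / α)) ^ (n : ℕ) ≤ f 0 * A ^ (-m) := by
    intro t ht
    have hx : 0 < α * t / n + Real.exp (α * c) := by
      have : 0 ≤ α * t / n := div_nonneg (mul_nonneg hα.le ht) hn'.le
      have h2 := Real.exp_pos (α * c)
      linarith
    have hxt : α / n * t = α * t / n := by ring
    have hbB : 0 < α / n * t + B := by
      have : 0 ≤ α / n * t := mul_nonneg (div_pos hα hn').le ht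
      linarith
    have hbA : 0 < α / n * t + A := by
      have : 0 ≤ α / n * t := mul_nonneg (div_pos hα hn').le ht
      linarith
    rw [hrescale t ht]
    constructor
    · have h1 : f 0 * B ^ (-m) ≤ f t * (α / n * t + B) ^ (-m) := by
        apply aux_bound n α B hn' hα hB f f' hderiv _ t ht
        intro s hs
        have hbs : 0 < α / n * s + B := by
          have : 0 ≤ α / n * s := mul_nonneg (div_pos hα hn').le hs
          linarith
        have := hlow s hs
        rw [div_le_iff₀ hbs] at this
        linarith
      refine h1.trans ?_
      apply mul_le_mul_of_nonneg_left _ (hpos t ht).le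
      apply Real.rpow_le_rpow_of_nonpos hx _ (neg_nonpos.mpr (by rw [hm]; positivity))
      rw [hxt]; linarith
    · have h1 : f t * (α / n * t + A) ^ (-m) ≤ f 0 * A ^ (-m) := by
        have := aux_bound n α A hn' hα hA (fun s => -f s) (fun s => -f' s)
          (fun s hs => (hderiv s hs).neg) ?_ t ht
        · have hAm : (0:ℝ) ≤ A ^ (-m) := Real.rpow_nonneg hA.le _
          simp only [neg_mul] at this
          linarith
        · intro s hs
          have hbs : 0 < α / n * s + A := by
            have : 0 ≤ α / n * s := mul_nonneg (div_pos hα hn').le hs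
            linarith
          have := hup s hs
          rw [le_div_iff₀ hbs] at this
          nlinarith
      refine le_trans ?_ h1
      apply mul_le_mul_of_nonneg_left _ (hpos t ht).le
      apply Real.rpow_le_rpow_of_nonpos hbA _ (neg_nonpos.mpr (by rw [hm]; positivity))
      rw [hxt]; linarith
  have hev : ∀ᶠ t in Filter.atTop, (0:ℝ) ≤ t := Filter.eventually_ge_atTop 0
  have hLlow : f 0 * B ^ (-m) ≤ L :=
    ge_of_tendsto hL (hev.mono fun t ht => (hbound t ht).1)
  have hLhigh : L ≤ f 0 * A ^ (-m) :=
    le_of_tendsto hL (hev.mono fun t ht => (hbound t ht).2)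
  refine ⟨⟨hLlow, hLhigh⟩, ?_⟩
  intro rinf areaM areaM0 u0inf u0sup hinf hsup hM hr hAe hBe hf0 hLe
  have hf0pos : 0 < areaM0 := hf0 ▸ hpos 0 le_rfl
  have hnne : n ≠ 0 := by omega
  -- rewrite B ^ (-m) and A ^ (-m)
  have hBm : B ^ (-m) = u0sup ^ (-(n:ℝ)) := by
    rw [hBe, ← Real.rpow_mul hsup.le]
    congr 1
    rw [hm]
    field_simp
  have hAm : A ^ (-m) = u0inf ^ (-(n:ℝ)) := by
    rw [hAe, ← Real.rpow_mul hinf.le]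
    congr 1
    rw [hm]
    field_simp
  rw [hBm, hf0, hLe] at hLlow
  rw [hAm, hf0, hLe] at hLhigh
  rw [Real.rpow_neg hsup.le, Real.rpow_natCast] at hLlow
  rw [Real.rpow_neg hinf.le, Real.rpow_natCast] at hLhigh
  set Q : ℝ := (areaM0 / areaM) ^ ((1 : ℝ) / n) with hQ
  have hQnn : 0 ≤ Q := Real.rpow_nonneg (by positivity) _
  have hQn : Q ^ (n : ℕ) = areaM0 / areaM := by
    rw [hQ, ← Real.rpow_natCast ((areaM0 / areaM) ^ ((1 : ℝ) / n)) n,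
      ← Real.rpow_mul (by positivity)]
    rw [show (1 : ℝ) / n * n = 1 by field_simp, Real.rpow_one]
  constructor
  · apply (pow_le_pow_iff_left₀ (by positivity) hr.le hnne).mp
    have key : ((1 / u0sup) * Q) ^ (n : ℕ) = areaM0 * (u0sup ^ n)⁻¹ / areaM := by
      rw [mul_pow, hQn, div_pow, one_pow]
      field_simp
    rw [key, div_le_iff₀ hM]
    exact hLlow
  · apply (pow_le_pow_iff_left₀ hr.le (by positivity) hnne).mp
    have key : ((1 / u0inf) * Q) ^ (n : ℕ) = areaM0 * (u0inf ^ n)⁻¹ / areaM := by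
      rw [mul_pow, hQn, div_pow, one_pow]
      field_simp
    rw [key, le_div_iff₀ hM]
    exact hLhigh
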